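/- arXiv:0810.0345 — 3 statements merged into one kernel-verified Lean document; each statement's English description precedes it below -/
import Mathlib

section
/- Let G be a non-locally-cyclic group. The non-cyclic graph of G has a dominating set of size 1 if and only if Cyc(G) = 1 and there exists an element x of order 2 with Cyc_G(x) = ⟨x⟩. -/
lemma isCyclic_of_le' {G : Type*} [Group G] {H K : Subgroup G} (hle : H ≤ K)
    (hK : IsCyclic K) : IsCyclic H := by
  haveI := hK
  have : IsCyclic (H.subgroupOf K) := Subgroup.isCyclic _
  exact isCyclic_of_surjective (Subgroup.subgroupOfEquivOfLe hle).toMonoidHom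
    (Subgroup.subgroupOfEquivOfLe hle).surjective

lemma zpowers_isCyclic' {G : Type*} [Group G] (x : G) : IsCyclic (Subgroup.zpowers x) := by
  refine ⟨⟨⟨x, Subgroup.mem_zpowers x⟩, ?_⟩⟩
  rintro ⟨g, m, rfl⟩
  exact ⟨m, Subtype.ext (by simp)⟩

lemma isCyclic_exists_zpowers {G : Type*} [Group G] {K : Subgroup G} (hK : IsCyclic K) :
    ∃ z ∈ K, K ≤ Subgroup.zpowers z := by
  obtain ⟨⟨z, hz⟩, hgen⟩ := hK
  refine ⟨z, hz, fun g hg => ?_⟩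
  obtain ⟨m, hm⟩ := hgen ⟨g, hg⟩
  exact ⟨m, congrArg Subtype.val hm⟩

lemma pair_closure_le {G : Type*} [Group G] {a b : G} {K : Subgroup G}
    (ha : a ∈ K) (hb : b ∈ K) : Subgroup.closure {a, b} ≤ K := by
  rw [Subgroup.closure_le]
  rintro g (rfl | rfl) <;> assumption

/-- The cyclicizer of a group: elements generating a cyclic subgroup with every element. -/
def cyclicizer (G : Type*) [Group G] : Set G :=
  {x | ∀ y : G, IsCyclic (Subgroup.closure {x, y} : Subgroup G)}

/-- The relative cyclicizer of an element. -/
def relCyclicizer {G : Type*} [Group G] (x : G) : Set G :=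
  {g | IsCyclic (Subgroup.closure {g, x} : Subgroup G)}

/-- A group is locally cyclic if every finitely generated subgroup is cyclic. -/
def IsLocallyCyclic (G : Type*) [Group G] : Prop :=
  ∀ H : Subgroup G, H.FG → IsCyclic H

/-- The non-cyclic graph of a group. -/
def noncyclicGraph (G : Type*) [Group G] :
    SimpleGraph {g : G // g ∉ cyclicizer G} where
  Adj x y := x ≠ y ∧ ¬ IsCyclic (Subgroup.closure {(x : G), (y : G)} : Subgroup G)
  symm := ⟨fun x y h => ⟨h.1.symm, by rw [Set.pair_comm]; exact h.2⟩⟩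
  loopless := ⟨fun x h => h.1 rfl⟩

/-- The cyclic graph of a group (complement of the non-cyclic graph). -/
def cyclicGraph (G : Type*) [Group G] :
    SimpleGraph {g : G // g ∉ cyclicizer G} where
  Adj x y := x ≠ y ∧ IsCyclic (Subgroup.closure {(x : G), (y : G)} : Subgroup G)
  symm := ⟨fun x y h => ⟨h.1.symm, by rw [Set.pair_comm]; exact h.2⟩⟩
  loopless := ⟨fun x h => h.1 rfl⟩

/-- A graph has clique number `n` if it has a clique of size `n` and no larger clique. -/
def hasCliqueNum {V : Type*} (Γ : SimpleGraph V) (n : ℕ) : Prop :=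
  (∃ s : Finset V, Γ.IsNClique n s) ∧ ∀ s : Finset V, Γ.IsClique (s : Set V) → s.card ≤ n

lemma one_mem_cyclicizer {G : Type*} [Group G] : (1 : G) ∈ cyclicizer G := by
  intro y
  exact isCyclic_of_le' (pair_closure_le (Subgroup.one_mem _) (Subgroup.mem_zpowers y))
    (zpowers_isCyclic' y)

lemma inv_mem_cyclicizer {G : Type*} [Group G] {x : G} (hx : x ∈ cyclicizer G) :
    x⁻¹ ∈ cyclicizer G := by
  intro y
  exact isCyclic_of_le'
    (pair_closure_le (Subgroup.inv_mem _ (Subgroup.subset_closure (by simp)))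
      (Subgroup.subset_closure (by simp))) (hx y)

lemma mul_mem_cyclicizer {G : Type*} [Group G] {a b : G} (ha : a ∈ cyclicizer G)
    (hb : b ∈ cyclicizer G) : a * b ∈ cyclicizer G := by
  intro y
  obtain ⟨z, hz, hle⟩ := isCyclic_exists_zpowers (hb y)
  obtain ⟨w, hw, hle'⟩ := isCyclic_exists_zpowers (ha z)
  have hzw : Subgroup.zpowers z ≤ Subgroup.zpowers w :=
    (Subgroup.zpowers_le).mpr (hle' (Subgroup.subset_closure (by simp)))
  have haw : a ∈ Subgroup.zpowers w := hle' (Subgroup.subset_closure (by simp))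
  have hbw : b ∈ Subgroup.zpowers w := hzw (hle (Subgroup.subset_closure (by simp)))
  have hyw : y ∈ Subgroup.zpowers w := hzw (hle (Subgroup.subset_closure (by simp)))
  exact isCyclic_of_le' (pair_closure_le (Subgroup.mul_mem _ haw hbw) hyw) (zpowers_isCyclic' w)

theorem dominating_singleton_iff
    {G : Type*} [Group G] (h : ¬ IsLocallyCyclic G) :
    (∃ v : {g : G // g ∉ cyclicizer G}, ∀ w, w = v ∨ (noncyclicGraph G).Adj v w) ↔
      (cyclicizer G = {1} ∧
        ∃ x : G, orderOf x = 2 ∧ relCyclicizer x = (Subgroup.zpowers x : Set G)) := by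
  constructor
  · rintro ⟨v, hv⟩
    have hdom : ∀ g : G, g ∉ cyclicizer G →
        IsCyclic (Subgroup.closure {(v : G), g} : Subgroup G) → g = (v : G) := by
      intro g hg hc
      rcases hv ⟨g, hg⟩ with he | hadj
      · exact congrArg Subtype.val he
      · exact absurd hc hadj.2
    have hv1 : (v : G) ≠ 1 := fun e => v.2 (e ▸ one_mem_cyclicizer)
    have hcyc : cyclicizer G = {1} := by
      ext c
      simp only [Set.mem_singleton_iff]
      constructor
      · intro hc
        by_contra hne
        obtain ⟨z, hz, hle⟩ := isCyclic_exists_zpowers (hc v)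
        have hvz : (v : G) ∈ Subgroup.zpowers z := hle (Subgroup.subset_closure (by simp))
        have hcz : c ∈ Subgroup.zpowers z := hle (Subgroup.subset_closure (by simp))
        have hvc_cyc : IsCyclic (Subgroup.closure {(v : G), (v : G) * c} : Subgroup G) :=
          isCyclic_of_le' (pair_closure_le hvz (Subgroup.mul_mem _ hvz hcz))
            (zpowers_isCyclic' z)
        by_cases hmem : (v : G) * c ∈ cyclicizer G
        · have : (v : G) ∈ cyclicizer G := by
            have := mul_mem_cyclicizer hmem (inv_mem_cyclicizer hc)
            simpa using this
          exact v.2 this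
        · have := hdom _ hmem hvc_cyc
          exact hne (by simpa using this)
      · rintro rfl
        exact one_mem_cyclicizer
    have hinv_cyc : IsCyclic (Subgroup.closure {(v : G), (v : G)⁻¹} : Subgroup G) :=
      isCyclic_of_le'
        (pair_closure_le (Subgroup.mem_zpowers _) (Subgroup.inv_mem _ (Subgroup.mem_zpowers _)))
        (zpowers_isCyclic' (v : G))
    have hv2 : (v : G)⁻¹ = (v : G) := by
      by_cases hmem : (v : G)⁻¹ ∈ cyclicizer G
      · have h1' : (v : G)⁻¹ ∈ ({1} : Set G) := hcyc.subset hmem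
        have hveq : (v : G)⁻¹ = 1 := h1'
        exact absurd (inv_eq_one.mp hveq) hv1
      · exact hdom _ hmem hinv_cyc
    have hsq : (v : G) ^ 2 = 1 := by
      rw [sq]
      nth_rewrite 1 [← hv2]
      exact inv_mul_cancel _
    have horder : orderOf (v : G) = 2 :=
      orderOf_eq_prime hsq hv1
    refine ⟨hcyc, (v : G), horder, ?_⟩
    ext g
    simp only [relCyclicizer, Set.mem_setOf_eq, SetLike.mem_coe]
    constructor
    · intro hg
      by_cases hmem : g ∈ cyclicizer G
      · rw [hcyc] at hmem
        rw [hmem]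
        exact Subgroup.one_mem _
      · have : g = (v : G) := hdom g hmem (by rwa [Set.pair_comm] at hg)
        rw [this]
        exact Subgroup.mem_zpowers _
    · intro hg
      obtain ⟨m, rfl⟩ := hg
      exact isCyclic_of_le'
        (pair_closure_le (Subgroup.zpow_mem _ (Subgroup.mem_zpowers _) m)
          (Subgroup.mem_zpowers _))
        (zpowers_isCyclic' (v : G))
  · rintro ⟨hcyc, x, hx2, hrel⟩
    have hx1 : x ≠ 1 := by
      intro e
      rw [e, orderOf_one] at hx2
      norm_num at hx2
    have hxmem : x ∉ cyclicizer G := by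
      rw [hcyc]
      simpa using hx1
    refine ⟨⟨x, hxmem⟩, fun w => ?_⟩
    by_cases hc : IsCyclic (Subgroup.closure {x, (w : G)} : Subgroup G)
    · left
      have hwrel : (w : G) ∈ relCyclicizer x := by
        show IsCyclic (Subgroup.closure {(w : G), x} : Subgroup G)
        rwa [Set.pair_comm]
      rw [hrel] at hwrel
      rw [SetLike.mem_coe, Subgroup.mem_zpowers_iff] at hwrel
      obtain ⟨m, hm⟩ := hwrel
      have hw1 : (w : G) ≠ 1 := fun e => w.2 (e ▸ one_mem_cyclicizer)
      have hxsq : x ^ (2 : ℤ) = 1 := by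
        have := pow_orderOf_eq_one x
        rw [hx2] at this
        exact_mod_cast (by exact_mod_cast this : x ^ ((2 : ℕ) : ℤ) = 1)
      have hmexp : x ^ m = x ^ (m % 2) := by
        conv_lhs => rw [← Int.mul_ediv_add_emod m 2]
        rw [zpow_add, zpow_mul, hxsq, one_zpow, one_mul]
      rcases Int.emod_two_eq m with h0 | h1
      · exfalso
        apply hw1
        rw [← hm, hmexp, h0, zpow_zero]
      · apply Subtype.ext
        show (w : G) = x
        rw [← hm, hmexp, h1, zpow_one]
    · right
      refine ⟨?_, hc⟩
      intro he
      apply hc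
      have : (w : G) = x := (congrArg Subtype.val he).symm
      rw [this]
      have : ({x, x} : Set G) = {x} := by simp
      rw [this, ← Subgroup.zpowers_eq_closure]
      exact zpowers_isCyclic' x
end

section
/- Let G be a finite group with Cyc(G) = 1, and let p_1, ..., p_k be distinct primes such that G has no element of order p_i·p_j for any i ≠ j. Then ν_{p_1}(G) + ... + ν_{p_k}(G) ≤ ω(C_G), where ν_p(G) is the number of subgroups of order p and ω(C_G) is the clique number of the non-cyclic graph of G. -/
lemma exists_generator_of_card_prime {G : Type*} [Group G] [Finite G]
    {H : Subgroup G} {q : ℕ} (hq : q.Prime) (hH : Nat.card H = q) :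
    ∃ g : G, orderOf g = q ∧ Subgroup.zpowers g = H := by
  have hnt : Nontrivial H := by
    rw [← Finite.one_lt_card_iff_nontrivial, hH]; exact hq.one_lt
  obtain ⟨g, hg⟩ := exists_ne (1 : H)
  have hdvd : orderOf g ∣ q := hH ▸ orderOf_dvd_natCard g
  have hord : orderOf g = q := by
    rcases (Nat.dvd_prime hq).mp hdvd with h | h
    · exact absurd (orderOf_eq_one_iff.mp h) hg
    · exact h
  have hordG : orderOf (g : G) = q := by rw [Subgroup.orderOf_coe, hord]
  refine ⟨g, hordG, ?_⟩
  refine Subgroup.eq_of_le_of_card_ge ((Subgroup.zpowers_le).mpr g.2) ?_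
  rw [hH, Nat.card_zpowers, hordG]

theorem sum_nu_p_le_cliqueNum
    {G : Type*} [Group G] [Finite G] (hcyc : cyclicizer G = {1})
    (k : ℕ) (p : Fin k → ℕ) (hp : ∀ i, (p i).Prime)
    (hinj : Function.Injective p)
    (hnoelt : ∀ i j, i ≠ j → ∀ g : G, orderOf g ≠ p i * p j)
    (n : ℕ) (hω : hasCliqueNum (noncyclicGraph G) n) :
    ∑ i, Nat.card {H : Subgroup G // Nat.card H = p i} ≤ n := by
  classical
  haveI : Finite (Subgroup G) :=
    Finite.of_injective (fun H => (H : Set G)) fun _ _ h => SetLike.coe_injective h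
  haveI : ∀ i, Fintype {H : Subgroup G // Nat.card H = p i} := fun i => Fintype.ofFinite _
  -- choose generators
  have hgen : ∀ s : (Σ i : Fin k, {H : Subgroup G // Nat.card H = p i}),
      ∃ g : G, orderOf g = p s.1 ∧ Subgroup.zpowers g = s.2.1 := fun s =>
    exists_generator_of_card_prime (hp s.1) s.2.2
  choose g hg1 hg2 using hgen
  have hne1 : ∀ s, g s ≠ 1 := by
    intro s h
    have := hg1 s
    rw [h, orderOf_one] at this
    exact (hp s.1).one_lt.ne' this.symm
  have hmem : ∀ s, g s ∉ cyclicizer G := by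
    intro s
    rw [hcyc]
    simpa using hne1 s
  set f : (Σ i : Fin k, {H : Subgroup G // Nat.card H = p i}) → {x : G // x ∉ cyclicizer G} :=
    fun s => ⟨g s, hmem s⟩ with hf
  -- key lemma: for s t with g s ≠ g t, the closure is not cyclic (else s = t)
  have key : ∀ s t, IsCyclic (Subgroup.closure {g s, g t} : Subgroup G) → s = t := by
    intro s t hC
    set C := (Subgroup.closure {g s, g t} : Subgroup G) with hCdef
    have hxC : g s ∈ C := Subgroup.subset_closure (Set.mem_insert _ _)
    have hyC : g t ∈ C := Subgroup.subset_closure (Set.mem_insert_of_mem _ rfl)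
    set x' : C := ⟨g s, hxC⟩
    set y' : C := ⟨g t, hyC⟩
    have hox : orderOf x' = p s.1 := by rw [Subgroup.orderOf_mk, hg1]
    have hoy : orderOf y' = p t.1 := by rw [Subgroup.orderOf_mk, hg1]
    obtain ⟨c, hc⟩ := hC.exists_generator
    obtain ⟨m, hm⟩ := Subgroup.mem_zpowers_iff.mp (hc x')
    obtain ⟨mm, hmm⟩ := Subgroup.mem_zpowers_iff.mp (hc y')
    have hcomm' : x' * y' = y' * x' := by rw [← hm, ← hmm, zpow_mul_comm]
    have hcomm : Commute (g s) (g t) := by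
      have := congrArg (Subtype.val) hcomm'
      exact this
    by_cases hpq : p s.1 = p t.1
    · -- same prime: subgroups coincide
      haveI : Fintype C := Fintype.ofFinite C
      have hle := IsCyclic.card_pow_eq_one_le (α := C) (hp s.1).pos
      have hx1 : x' ^ (p s.1) = 1 := by rw [← hox]; exact pow_orderOf_eq_one x'
      have hy1 : y' ^ (p s.1) = 1 := by
        rw [hpq, ← hoy]; exact pow_orderOf_eq_one y'
      set T : Finset C := (Subgroup.zpowers x' : Set C).toFinset with hT
      have hTsub : T ⊆ ({a : C | a ^ (p s.1) = 1} : Finset C) := by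
        intro z hz
        rw [hT, Set.mem_toFinset] at hz
        obtain ⟨nn, hnn⟩ := Subgroup.mem_zpowers_iff.mp hz
        simp only [Finset.mem_filter, Finset.mem_univ, true_and, Set.mem_setOf_eq]
        rw [← hnn, ← zpow_natCast (x' ^ nn), ← zpow_mul, mul_comm, zpow_mul, zpow_natCast, hx1,
          one_zpow]
      have hTcard : T.card = p s.1 := by
        rw [hT, Set.toFinset_card]
        rw [← Nat.card_eq_fintype_card]
        simp only [SetLike.coe_sort_coe]
        rw [Nat.card_zpowers, hox]
      have hTeq : T = ({a : C | a ^ (p s.1) = 1} : Finset C) :=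
        Finset.eq_of_subset_of_card_le hTsub (by rw [hTcard]; exact hle)
      have hyT : y' ∈ T := by
        rw [hTeq]
        simp only [Finset.mem_filter, Finset.mem_univ, true_and, Set.mem_setOf_eq]
        exact hy1
      rw [hT, Set.mem_toFinset] at hyT
      obtain ⟨nn, hnn⟩ := Subgroup.mem_zpowers_iff.mp hyT
      have hytG : g t ∈ Subgroup.zpowers (g s) := by
        refine ⟨nn, ?_⟩
        have := congrArg (Subtype.val) hnn
        simpa using this
      have hKH : s.2.1 = t.2.1 := by
        rw [← hg2 s, ← hg2 t]
        refine (Subgroup.eq_of_le_of_card_ge ((Subgroup.zpowers_le).mpr ?_) ?_).symm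
        · exact hytG
        · rw [Nat.card_zpowers, Nat.card_zpowers, hg1, hg1, hpq]
      have hij : s.1 = t.1 := hinj hpq
      obtain ⟨i, H, hH⟩ := s
      obtain ⟨j, K, hK⟩ := t
      dsimp at hij hKH
      subst hij
      simp only [Sigma.mk.inj_iff, heq_eq_eq, true_and]
      exact Subtype.ext hKH
    · -- distinct primes: element of order p i * p j
      exfalso
      have hne : s.1 ≠ t.1 := fun h => hpq (congrArg p h)
      have hcop : Nat.Coprime (orderOf (g s)) (orderOf (g t)) := by
        rw [hg1, hg1]
        exact (Nat.coprime_primes (hp s.1) (hp t.1)).mpr hpq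
      have := hcomm.orderOf_mul_eq_mul_orderOf_of_coprime hcop
      rw [hg1, hg1] at this
      exact hnoelt s.1 t.1 hne _ this
  have finj : Function.Injective f := by
    intro s t hst
    have hgeq : g s = g t := congrArg Subtype.val hst
    by_contra hne
    have hadj : ¬ IsCyclic (Subgroup.closure {g s, g t} : Subgroup G) :=
      fun h => hne (key s t h)
    apply hadj
    rw [hgeq]
    have : ({g t, g t} : Set G) = {g t} := by simp
    rw [this]
    rw [show Subgroup.closure ({g t} : Set G) = Subgroup.zpowers (g t) from
      (Subgroup.zpowers_eq_closure _).symm]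
    exact ⟨⟨⟨g t, Subgroup.mem_zpowers _⟩, fun x => by
      obtain ⟨nn, hnn⟩ := Subgroup.mem_zpowers_iff.mp x.2
      exact ⟨nn, Subtype.ext (by simpa using hnn)⟩⟩⟩
  -- the image is a clique
  have hclique : (noncyclicGraph G).IsClique ((Finset.univ.image f : Finset _) : Set _) := by
    intro a ha b hb hab
    simp only [Finset.coe_image, Set.mem_image, Finset.mem_coe, Finset.mem_univ] at ha hb
    obtain ⟨s, _, rfl⟩ := ha
    obtain ⟨t, _, rfl⟩ := hb
    refine (⟨hab, ?_⟩ : _ ∧ _)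
    intro hC
    exact hab (congrArg f (key s t hC))
  have hcard : (Finset.univ.image f).card
      = ∑ i, Nat.card {H : Subgroup G // Nat.card H = p i} := by
    rw [Finset.card_image_of_injective _ finj, Finset.card_univ, Fintype.card_sigma]
    simp [Nat.card_eq_fintype_card]
  calc ∑ i, Nat.card {H : Subgroup G // Nat.card H = p i}
      = (Finset.univ.image f).card := hcard.symm
    _ ≤ n := hω.2 _ hclique
end

section
/- Let p be a prime and G a group of order p^n (n > 1) and exponent p. Then the clique number of the non-cyclic graph of G equals (p^n − 1)/(p − 1), i.e., the number of subgroups of G of order p. -/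
private lemma isCyclic_zpowers' {G : Type*} [Group G] (g : G) :
    IsCyclic (Subgroup.zpowers g) := by
  constructor
  refine ⟨⟨g, Subgroup.mem_zpowers g⟩, fun x => ?_⟩
  obtain ⟨k, hk⟩ := x.2
  exact ⟨k, Subtype.ext (by simpa using hk)⟩

theorem cliqueNum_of_exponent_p_group
    {G : Type*} [Group G] [Finite G] (p n : ℕ) (hp : p.Prime) (hn : 1 < n)
    (hcard : Nat.card G = p ^ n) (hexp : ∀ g : G, g ^ p = 1) :
    hasCliqueNum (noncyclicGraph G) ((p ^ n - 1) / (p - 1)) ∧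
      (p ^ n - 1) / (p - 1) = Nat.card {H : Subgroup G // Nat.card H = p} := by
  classical
  haveI : Fintype G := Fintype.ofFinite G
  haveI : Finite (Subgroup G) :=
    Finite.of_injective (fun H : Subgroup G => (H : Set G)) SetLike.coe_injective
  haveI : Fintype (Subgroup G) := Fintype.ofFinite _
  have hp2 : 2 ≤ p := hp.two_le
  -- orders
  have hord : ∀ g : G, g ≠ 1 → orderOf g = p := by
    intro g hg
    rcases hp.eq_one_or_self_of_dvd _ (orderOf_dvd_of_pow_eq_one (hexp g)) with h | h
    · exact absurd (orderOf_eq_one_iff.mp h) hg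
    · exact h
  have hzcard : ∀ g : G, g ≠ 1 → Nat.card (Subgroup.zpowers g) = p := fun g hg => by
    rw [Nat.card_zpowers, hord g hg]
  -- the key equivalence
  have hkey : ∀ x y : G, x ≠ 1 → y ≠ 1 →
      (IsCyclic (Subgroup.closure {x, y} : Subgroup G) ↔
        Subgroup.zpowers x = Subgroup.zpowers y) := by
    intro x y hx hy
    constructor
    · intro hcyc
      set H := Subgroup.closure ({x, y} : Set G) with hH
      have hxH : x ∈ H := Subgroup.subset_closure (by simp)
      have hyH : y ∈ H := Subgroup.subset_closure (by simp)
      obtain ⟨z, hz⟩ := hcyc.exists_generator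
      have hHz : H ≤ Subgroup.zpowers (z : G) := by
        intro h hh
        obtain ⟨k, hk⟩ := hz ⟨h, hh⟩
        exact ⟨k, by simpa using congrArg Subtype.val hk⟩
      have hcardH : Nat.card H ≤ p := by
        calc Nat.card H ≤ Nat.card (Subgroup.zpowers (z : G)) :=
              Nat.card_le_card_of_injective _ (Subgroup.inclusion_injective hHz)
          _ = orderOf (z : G) := Nat.card_zpowers _
          _ ≤ p := Nat.le_of_dvd hp.pos (orderOf_dvd_of_pow_eq_one (hexp _))
      have hxeq : Subgroup.zpowers x = H :=
        Subgroup.eq_of_le_of_card_ge (Subgroup.zpowers_le.mpr hxH)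
          (by rw [hzcard x hx]; exact hcardH)
      have hyeq : Subgroup.zpowers y = H :=
        Subgroup.eq_of_le_of_card_ge (Subgroup.zpowers_le.mpr hyH)
          (by rw [hzcard y hy]; exact hcardH)
      rw [hxeq, hyeq]
    · intro h
      have hclo : Subgroup.closure ({x, y} : Set G) = Subgroup.zpowers x := by
        apply le_antisymm
        · rw [Subgroup.closure_le]
          intro a ha
          simp only [Set.mem_insert_iff, Set.mem_singleton_iff] at ha
          rcases ha with rfl | rfl
          · exact Subgroup.mem_zpowers _
          · rw [h]; exact Subgroup.mem_zpowers _
        · exact Subgroup.zpowers_le.mpr (Subgroup.subset_closure (by simp))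
      rw [hclo]; exact isCyclic_zpowers' x
  -- cyclicizer is trivial
  have hcyc1 : cyclicizer G = {1} := by
    ext x
    simp only [cyclicizer, Set.mem_setOf_eq, Set.mem_singleton_iff]
    constructor
    · intro hx
      by_contra hx1
      obtain ⟨y, hy⟩ : ∃ y : G, y ∉ Subgroup.zpowers x := by
        by_contra hcon
        push_neg at hcon
        have htop : Subgroup.zpowers x = ⊤ := by
          ext g; simp [hcon g]
        have : Nat.card (Subgroup.zpowers x) = Nat.card G := by
          rw [htop, Subgroup.card_top]
        rw [hzcard x hx1, hcard] at this
        have : p ^ 1 = p ^ n := by simpa using this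
        have := Nat.pow_right_injective hp2 this
        omega
      have hy1 : y ≠ 1 := fun h => hy (h ▸ (Subgroup.zpowers x).one_mem)
      have := (hkey x y hx1 hy1).mp (hx y)
      exact hy (this ▸ Subgroup.mem_zpowers y)
    · rintro rfl y
      have hclo : Subgroup.closure ({1, y} : Set G) = Subgroup.zpowers y := by
        apply le_antisymm
        · rw [Subgroup.closure_le]
          intro a ha
          simp only [Set.mem_insert_iff, Set.mem_singleton_iff] at ha
          rcases ha with rfl | rfl
          · exact (Subgroup.zpowers _).one_mem
          · exact Subgroup.mem_zpowers _
        · exact Subgroup.zpowers_le.mpr (Subgroup.subset_closure (by simp))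
      rw [hclo]; exact isCyclic_zpowers' y
  have hvert : ∀ g : G, g ∉ cyclicizer G ↔ g ≠ 1 := by
    intro g; rw [hcyc1]; simp
  -- zpowers g = H iff g ∈ H, for nontrivial g and H of order p
  have hmemzp : ∀ (g : G) (H : Subgroup G), g ≠ 1 → Nat.card H = p →
      (Subgroup.zpowers g = H ↔ g ∈ H) := by
    intro g H hg hHp
    constructor
    · intro h; rw [← h]; exact Subgroup.mem_zpowers g
    · intro h
      exact Subgroup.eq_of_le_of_card_ge (Subgroup.zpowers_le.mpr h)
        (by rw [hzcard g hg, hHp])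
  -- the counting
  set t : Finset (Subgroup G) := Finset.univ.filter (fun H => Nat.card H = p) with ht
  have hcount : p ^ n - 1 = t.card * (p - 1) := by
    have hfib := Finset.card_eq_sum_card_fiberwise
      (f := fun g : G => Subgroup.zpowers g) (s := Finset.univ.erase 1) (t := t)
      (by
        intro g hg
        rw [Finset.mem_coe, Finset.mem_erase] at hg
        rw [ht, Finset.mem_coe, Finset.mem_filter]
        exact ⟨Finset.mem_univ _, hzcard g hg.1⟩)
    have hscard : (Finset.univ.erase (1 : G)).card = p ^ n - 1 := by
      rw [Finset.card_erase_of_mem (Finset.mem_univ _), Finset.card_univ,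
        ← Nat.card_eq_fintype_card, hcard]
    have hfibcard : ∀ H ∈ t, ((Finset.univ.erase (1 : G)).filter
        (fun g => Subgroup.zpowers g = H)).card = p - 1 := by
      intro H hH
      rw [ht, Finset.mem_filter] at hH
      have heq : (Finset.univ.erase (1 : G)).filter (fun g => Subgroup.zpowers g = H)
          = (Finset.univ.filter (fun g : G => g ∈ H)).erase 1 := by
        ext g
        simp only [Finset.mem_filter, Finset.mem_erase, Finset.mem_univ, true_and, and_true]
        constructor
        · rintro ⟨hg1, hgz⟩
          exact ⟨hg1, (hmemzp g H hg1 hH.2).mp hgz⟩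
        · rintro ⟨hg1, hgH⟩
          exact ⟨hg1, (hmemzp g H hg1 hH.2).mpr hgH⟩
      rw [heq, Finset.card_erase_of_mem (by simp [H.one_mem]),
        ← Fintype.card_subtype]
      rw [show Fintype.card {g : G // g ∈ H} = Nat.card H from
        (Nat.card_eq_fintype_card).symm, hH.2]
    rw [hscard] at hfib
    rw [hfib, Finset.sum_congr rfl hfibcard, Finset.sum_const, smul_eq_mul]
  have hNcard : Nat.card {H : Subgroup G // Nat.card H = p} = t.card := by
    rw [Nat.card_eq_fintype_card, Fintype.card_subtype]
  have hdiv : (p ^ n - 1) / (p - 1) = t.card := by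
    rw [hcount, Nat.mul_div_cancel _ (by omega)]
  refine ⟨⟨?_, ?_⟩, by rw [hdiv, hNcard]⟩
  · -- existence of a clique of that size
    have hsec : ∀ H : {H : Subgroup G // Nat.card H = p},
        ∃ g : G, g ≠ 1 ∧ Subgroup.zpowers g = H.1 := by
      rintro ⟨H, hH⟩
      haveI : Nontrivial H :=
        Finite.one_lt_card_iff_nontrivial.mp (by rw [hH]; omega)
      obtain ⟨x, hx⟩ := exists_ne (1 : H)
      have hx1 : (x : G) ≠ 1 := fun h => hx (Subtype.ext h)
      exact ⟨x, hx1, (hmemzp x H hx1 hH).mpr x.2⟩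
    choose ι hι1 hι2 using hsec
    set v : {H : Subgroup G // Nat.card H = p} → {g : G // g ∉ cyclicizer G} :=
      fun H => ⟨ι H, (hvert _).mpr (hι1 H)⟩ with hv
    have hvinj : Function.Injective v := by
      intro H1 H2 h
      have : Subgroup.zpowers (ι H1) = Subgroup.zpowers (ι H2) := by
        rw [show ι H1 = ι H2 from congrArg Subtype.val h]
      rw [hι2 H1, hι2 H2] at this
      exact Subtype.ext this
    refine ⟨Finset.univ.image v, ?_, ?_⟩
    · intro a ha b hb hab
      simp only [Finset.coe_image, Set.mem_image] at ha hb
      obtain ⟨H1, _, rfl⟩ := ha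
      obtain ⟨H2, _, rfl⟩ := hb
      refine ⟨hab, ?_⟩
      rw [hkey _ _ (hι1 H1) (hι1 H2), hι2 H1, hι2 H2]
      intro h
      exact hab (congrArg v (Subtype.ext h))
    · rw [Finset.card_image_of_injective _ hvinj, Finset.card_univ, hdiv,
        ← Nat.card_eq_fintype_card, hNcard]
  · -- upper bound
    intro s hs
    rw [hdiv]
    refine Finset.card_le_card_of_injOn (t := t) (fun g => Subgroup.zpowers (g : G)) ?_ ?_
    · intro g hg
      rw [ht, Finset.mem_coe, Finset.mem_filter]
      exact ⟨Finset.mem_univ _, hzcard _ ((hvert _).mp g.2)⟩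
    · intro a ha b hb hab
      by_contra hne
      have hadj := hs ha hb hne
      exact hadj.2 ((hkey _ _ ((hvert _).mp a.2) ((hvert _).mp b.2)).mpr hab)
end
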